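/- There exists a subfamily S ⊆ R_2 that is a D_n^↑-basic-separator set: every K ∈ S is a regular language with K ∩ D_n^↑ = ∅, and every regular language L ⊆ Σ_n^* with L ∩ D_n^↑ = ∅ is contained in a finite union of members of S. -/

import Mathlib

set_option linter.unusedVariables false

/-! ### Alphabet, effects, Dyck languages -/

abbrev Sig (n : ℕ) := Fin n × Bool

def letterEff {n : ℕ} (a : Sig n) : Fin n → ℤ :=
  fun j => if j = a.1 then (if a.2 then 1 else -1) else 0

def wordEff {n : ℕ} (w : List (Sig n)) : Fin n → ℤ :=
  (w.map letterEff).sum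

/-- The Dyck language `D_n`. -/
def Dyck (n : ℕ) : Language (Sig n) :=
  {w | wordEff w = 0 ∧ ∀ u, u <+: w → ∀ j, 0 ≤ wordEff u j}

/-- The coverability Dyck language `D_n^↑`. -/
def CovDyck (n : ℕ) : Language (Sig n) :=
  {w | ∀ u, u <+: w → ∀ j, 0 ≤ wordEff u j}

/-- The `ℤ`-Dyck language `D_n^ℤ`. -/
def ZDyck (n : ℕ) : Language (Sig n) :=
  {w | wordEff w = 0}

/-! ### VASS -/

structure VASS (A : Type) where
  Q : Type
  C : Type
  finQ : Finite Q
  finC : Finite C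
  E : Set (Q × Option A × (C → ℤ) × Q)
  finE : E.Finite

inductive VASS.NRun {A : Type} (V : VASS A) :
    (V.Q × (V.C → ℕ)) → List A → (V.Q × (V.C → ℕ)) → Prop
  | refl (cfg : V.Q × (V.C → ℕ)) : VASS.NRun V cfg [] cfg
  | step {q : V.Q} {c : V.C → ℕ} {a : Option A} {d : V.C → ℤ} {q' : V.Q}
      {c' : V.C → ℕ} {w : List A} {last : V.Q × (V.C → ℕ)} :
      (q, a, d, q') ∈ V.E →
      (∀ j, (c' j : ℤ) = (c j : ℤ) + d j) →
      VASS.NRun V (q', c') w last →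
      VASS.NRun V (q, c) (a.toList ++ w) last

/-- An initialized VASS: generalized initial/final configurations,
with `none` playing the role of `ω`. -/
structure InitVASS (A : Type) extends VASS A where
  qin : Q
  qout : Q
  cin : C → Option ℕ
  cout : C → Option ℕ

/-- The reachability language of an initialized VASS. -/
def InitVASS.lang {A : Type} (V : InitVASS A) : Language A :=
  {w | ∃ c0 cl : V.C → ℕ,
      V.toVASS.NRun (V.qin, c0) w (V.qout, cl) ∧
      (∀ j m, V.cin j = some m → c0 j = m) ∧
      (∀ j m, V.cout j = some m → cl j = m)}

/-! ### Transducers -/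

structure Transducer (G A : Type) where
  Q : Type
  finQ : Finite Q
  start : Q
  accept : Set Q
  trans : Set (Q × (Option G × Option A) × Q)
  finT : trans.Finite

inductive Transducer.Path {G A : Type} (T : Transducer G A) :
    T.Q → List G → List A → T.Q → Prop
  | refl (q : T.Q) : Transducer.Path T q [] [] q
  | step {q q' qf : T.Q} {g : Option G} {a : Option A} {u : List G} {v : List A} :
      (q, (g, a), q') ∈ T.trans →
      Transducer.Path T q' u v qf →
      Transducer.Path T q (g.toList ++ u) (a.toList ++ v) qf

/-- The relation recognized by a transducer. -/
def Transducer.rel {G A : Type} (T : Transducer G A) (u : List G) (v : List A) : Prop :=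
  ∃ qf ∈ T.accept, T.Path T.start u v qf

/-- `T⁻¹(L)`. -/
def Transducer.invImage {G A : Type} (T : Transducer G A) (L : Language A) : Language G :=
  {u | ∃ v ∈ L, T.rel u v}

/-! ### Regular separability -/

def RegSep {A : Type} (L1 L2 : Language A) : Prop :=
  ∃ R : Language A, R.IsRegular ∧ L1 ≤ R ∧ ∀ w ∈ R, w ∉ L2

/-! ### Linear sets and regular approximations -/

structure LinSet (n : ℕ) where
  base : Fin n → ℤ
  periods : Set (Fin n → ℤ)
  finP : periods.Finite

def LinSet.toSet {n : ℕ} (L : LinSet n) : Set (Fin n → ℤ) :=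
  {x | ∃ p ∈ AddSubmonoid.closure L.periods, x = L.base + p}

def inBox {n : ℕ} (k : ℕ) (x : Fin n → ℤ) : Prop :=
  ∀ j, -(k : ℤ) ≤ x j ∧ x j ≤ (k : ℤ)

/-- Reachability in the ε-NFA underlying the `k`-th regular approximation of `L`:
states are vectors in `[-k,k]^n`, letters move by their effect, ε-transitions
subtract a period. -/
inductive KReach {n : ℕ} (L : LinSet n) (k : ℕ) :
    (Fin n → ℤ) → List (Sig n) → (Fin n → ℤ) → Prop
  | refl (x : Fin n → ℤ) (h : inBox k x) : KReach L k x [] x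
  | letter {x y : Fin n → ℤ} {w : List (Sig n)} (a : Sig n)
      (h : inBox k x) (h' : inBox k (x + letterEff a)) :
      KReach L k (x + letterEff a) w y → KReach L k x (a :: w) y
  | eps {x y : Fin n → ℤ} {w : List (Sig n)} {p : Fin n → ℤ}
      (hp : p ∈ L.periods) (h : inBox k x) (h' : inBox k (x - p)) :
      KReach L k (x - p) w y → KReach L k x w y

/-- The `k`-th regular approximation `K^k(L)`. -/
def KApprox {n : ℕ} (L : LinSet n) (k : ℕ) : Language (Sig n) :=
  {w | ∃ y, KReach L k 0 w y ∧ y ∈ L.toSet}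

/-! ### The `⊕⁺` operation and the families `R_ℓ` -/

def posPlus {n : ℕ} (K L : Set (Fin n → ℤ)) : Set (Fin n → ℤ) :=
  {x | (∀ j, 0 ≤ x j) ∧ ∃ a ∈ K, (∀ j, 0 ≤ a j) ∧ ∃ b ∈ L, x = a + b}

def posFoldAux {n : ℕ} : Set (Fin n → ℤ) → List (Set (Fin n → ℤ)) → Set (Fin n → ℤ)
  | S, [] => S
  | S, L :: Ls => posFoldAux (posPlus S L) Ls

/-- `posFold [L₁, …, L_ℓ] = L₁ ⊕⁺ ⋯ ⊕⁺ L_ℓ` (associated to the left); for `ℓ = 1`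
it is `L₁` itself. -/
def posFold {n : ℕ} : List (Set (Fin n → ℤ)) → Set (Fin n → ℤ)
  | [] => ∅
  | L :: Ls => posFoldAux L Ls

/-- The family `R_ℓ`. -/
def RFam (n ℓ : ℕ) : Set (Language (Sig n)) :=
  {K | ∃ (k : ℕ) (Ls : List (LinSet n)), Ls.length = ℓ ∧
      (0 : Fin n → ℤ) ∉ posFold (Ls.map LinSet.toSet) ∧
      K = (Ls.map (fun L => KApprox L k)).prod}

/-- `R_{≤ m} = ⋃_{1 ≤ i ≤ m} R_i`. -/
def RleFam (n m : ℕ) : Set (Language (Sig n)) :=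
  ⋃ i ∈ Set.Icc 1 m, RFam n i

/-- `R = ⋃_{ℓ ≥ 1} R_ℓ`. -/
def RAll (n : ℕ) : Set (Language (Sig n)) :=
  ⋃ i ∈ Set.Ici 1, RFam n i

/-! ### Basic separator sets -/

def IsBasicSepSet {n : ℕ} (S : Language (Sig n)) (B : Set (Language (Sig n))) : Prop :=
  (∀ K ∈ B, K.IsRegular ∧ ∀ w ∈ K, w ∉ S) ∧
  (∀ L : Language (Sig n), L.IsRegular → (∀ w ∈ L, w ∉ S) →
    ∃ F ⊆ B, F.Finite ∧ ∀ w ∈ L, ∃ K ∈ F, w ∈ K)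

/-! Extra defs for specific statements -/

/-- `u ∼_A v`: the words induce the same state transformation in the DFA `M`. -/
def simEq {α σ : Type} (M : DFA α σ) (u v : List α) : Prop :=
  ∀ p : σ, M.evalFrom p u = M.evalFrom p v

/-- Assemble `w₀ m₁ w₁ ⋯ m_k w_k` over `Σ ⊎ Σ#` (`Sum.inl` = plain, `Sum.inr` = marked). -/
def assemble {α : Type} : List (List α) → List α → List (α ⊕ α)
  | [], _ => []
  | w :: _, [] => w.map Sum.inl
  | w :: ws, m :: ms => w.map Sum.inl ++ Sum.inr m :: assemble ws ms

/-- The set of effects of a language. -/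
def effSet {n : ℕ} (L : Language (Sig n)) : Set (Fin n → ℤ) :=
  {v | ∃ w ∈ L, wordEff w = v}

/-- `Mod(μ, v)`. -/
def ModLang (n μ : ℕ) (v : Fin n → ℤ) : Language (Sig n) :=
  {w | ∀ j, wordEff w j ≡ v j [ZMOD (μ : ℤ)]}

/-- `ModSet(μ, v)`: base `v`, periods `{±μ·e_i}`. -/
def ModSet (n μ : ℕ) (v : Fin n → ℤ) : LinSet n where
  base := v
  periods := (Set.range fun i : Fin n => (μ : ℤ) • Pi.single i (1 : ℤ)) ∪
    (Set.range fun i : Fin n => -((μ : ℤ) • Pi.single i (1 : ℤ)))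
  finP := (Set.finite_range _).union (Set.finite_range _)

/-- `Cov(k, i)`. -/
def CovLang (n k : ℕ) (i : Fin n) : Language (Sig n) :=
  {x | ∃ w w', x = w ++ w' ∧ wordEff w i < 0 ∧
      ∀ u, u <+: w → u ≠ w → 0 ≤ wordEff u i ∧ wordEff u i ≤ (k : ℤ)}

/-- `L_{neg,i}`: base `-e_i`, periods `{±e_j : j ≠ i}`. -/
def LNeg (n : ℕ) (i : Fin n) : LinSet n where
  base := -Pi.single i 1
  periods := ((fun j : Fin n => Pi.single j (1 : ℤ)) '' {j | j ≠ i}) ∪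
    ((fun j : Fin n => -Pi.single j (1 : ℤ)) '' {j | j ≠ i})
  finP := ((Set.toFinite _).image _).union ((Set.toFinite _).image _)

/-- `Z`: base `0`, periods `{±e_j}`. -/
def ZSet (n : ℕ) : LinSet n where
  base := 0
  periods := (Set.range fun j : Fin n => Pi.single j (1 : ℤ)) ∪
    (Set.range fun j : Fin n => -Pi.single j (1 : ℤ))
  finP := (Set.finite_range _).union (Set.finite_range _)

/-! The language `C_ℓ` over `Σ₂` -/

def ltrA1 : Sig 2 := (0, true)
def ltrA2 : Sig 2 := (1, true)
def ltrB1 : Sig 2 := (0, false)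
def ltrB2 : Sig 2 := (1, false)

def fwdWord (j : ℕ) : List (Sig 2) := ltrA1 :: List.replicate j ltrA2
def bwdWord (j : ℕ) : List (Sig 2) := ltrB1 :: List.replicate j ltrB2

def segLang (j : ℕ) : Language (Sig 2) :=
  KStar.kstar ({fwdWord j, bwdWord j} : Language (Sig 2))

def aPlusLang : Language (Sig 2) :=
  {w | ∃ m : ℕ, 0 < m ∧ w = List.replicate m ltrA1}

def CLang (ℓ : ℕ) : Language (Sig 2) :=
  aPlusLang * ((List.range ℓ).map (fun j => segLang (j + 1))).prod


section Aux10
open Classical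

variable {n : ℕ}

lemma wordEff_nil : wordEff ([] : List (Sig n)) = 0 := by simp [wordEff]

lemma wordEff_cons (a : Sig n) (w : List (Sig n)) :
    wordEff (a :: w) = letterEff a + wordEff w := by simp [wordEff]

lemma wordEff_append (u v : List (Sig n)) :
    wordEff (u ++ v) = wordEff u + wordEff v := by simp [wordEff]

lemma letterEff_bounds (a : Sig n) (j : Fin n) :
    -1 ≤ letterEff a j ∧ letterEff a j ≤ 1 := by
  simp only [letterEff]
  split_ifs <;> norm_num

lemma letterEff_eq_single (a : Sig n) :
    letterEff a = (if a.2 then Pi.single a.1 (1:ℤ) else -Pi.single a.1 (1:ℤ)) := by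
  funext j
  by_cases h2 : a.2 <;> by_cases hj : j = a.1 <;>
    simp [letterEff, Pi.single_apply, h2, hj]

lemma wordEff_abs_le (w : List (Sig n)) (j : Fin n) :
    -(w.length : ℤ) ≤ wordEff w j ∧ wordEff w j ≤ w.length := by
  induction w with
  | nil => simp [wordEff_nil]
  | cons a w ih =>
    have hb := letterEff_bounds a j
    have : wordEff (a :: w) j = letterEff a j + wordEff w j := by
      rw [wordEff_cons]; rfl
    rw [this]
    simp only [List.length_cons]
    push_cast
    omega

/-- first hit lemma: if some prefix goes negative in coordinate `i`, there is a
prefix ending exactly at `-1` whose proper prefixes are nonnegative. -/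
lemma firstHit {w u : List (Sig n)} {i : Fin n} (hu : u <+: w)
    (hneg : wordEff u i < 0) :
    ∃ u', u' <+: u ∧ wordEff u' i = -1 ∧
      ∀ v, v <+: u' → v ≠ u' → 0 ≤ wordEff v i := by
  clear hu
  obtain ⟨m, hm⟩ : ∃ m, u.length ≤ m := ⟨u.length, le_rfl⟩
  induction m generalizing u with
  | zero =>
    have : u = [] := List.eq_nil_of_length_eq_zero (Nat.le_zero.1 hm)
    subst this; simp [wordEff_nil] at hneg
  | succ m IH =>
  rcases Classical.em (∃ v, v <+: u ∧ v ≠ u ∧ wordEff v i < 0) with ⟨v, hv, hne, hvneg⟩ | hno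
  · have hlen : v.length < u.length := by
      rcases lt_or_eq_of_le hv.length_le with h | h
      · exact h
      · exact absurd (hv.eq_of_length h) hne
    obtain ⟨u', h1, h2, h3⟩ := IH hvneg (by omega)
    exact ⟨u', h1.trans hv, h2, h3⟩
  · push_neg at hno
    rcases u.eq_nil_or_concat with rfl | ⟨u₀, a, rfl⟩
    · simp [wordEff_nil] at hneg
    · rw [List.concat_eq_append] at *
      have h0 : 0 ≤ wordEff u₀ i := by
        by_contra h
        exact absurd (hno u₀ (by simp) (by simp)) (by omega)
      have heq : wordEff (u₀ ++ [a]) i = wordEff u₀ i + letterEff a i := by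
        rw [wordEff_append, wordEff_cons, wordEff_nil]
        show wordEff u₀ i + (letterEff a i + 0) = _
        ring
      have hb := letterEff_bounds a i
      refine ⟨u₀ ++ [a], List.prefix_rfl, by omega, ?_⟩
      intro v hv hne
      by_contra h
      exact absurd (hno v hv hne) (by omega)

lemma inBox_zero {k : ℕ} : inBox (n := n) k 0 := by
  intro j
  simp only [Pi.zero_apply]
  omega

lemma inBox_single {k : ℕ} {i : Fin n} {c : ℤ} (hc : -(k:ℤ) ≤ c ∧ c ≤ k) :
    inBox k (Pi.single i c) := by
  intro j
  rcases eq_or_ne j i with rfl | hne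
  · simpa using hc
  · simp only [Pi.single_apply, if_neg hne]
    omega

lemma letterEff_single (a : Sig n) : letterEff a = Pi.single a.1 (letterEff a a.1) := by
  funext j
  rcases eq_or_ne j a.1 with rfl | hne
  · simp
  · simp [letterEff, Pi.single_apply, hne]

lemma letterEff_ne (a : Sig n) {j : Fin n} (h : j ≠ a.1) : letterEff a j = 0 := by
  simp [letterEff, h]

lemma letterEff_mem_zset_periods (a : Sig n) : letterEff a ∈ (ZSet n).periods := by
  rw [letterEff_eq_single]
  by_cases h2 : a.2
  · rw [if_pos h2]
    exact Set.mem_union_left _ ⟨a.1, rfl⟩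
  · rw [if_neg h2]
    exact Set.mem_union_right _ ⟨a.1, rfl⟩

lemma kreach_zset {k : ℕ} (hk : 1 ≤ k) (w : List (Sig n)) :
    KReach (ZSet n) k 0 w 0 := by
  induction w with
  | nil => exact KReach.refl 0 inBox_zero
  | cons a w ih =>
    have hbox : inBox k (0 + letterEff a) := by
      intro j
      have := letterEff_bounds a j
      simp only [Pi.add_apply, Pi.zero_apply, zero_add]
      omega
    refine KReach.letter a inBox_zero hbox ?_
    refine KReach.eps (letterEff_mem_zset_periods a) hbox ?_ ?_
    · simpa using inBox_zero
    · simpa using ih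

lemma kapprox_zset {k : ℕ} (hk : 1 ≤ k) : KApprox (ZSet n) k = Set.univ := by
  refine Set.eq_univ_of_forall fun w => ?_
  refine ⟨0, kreach_zset hk w, 0, AddSubmonoid.zero_mem _, ?_⟩
  show (0 : Fin n → ℤ) = 0 + 0
  rw [add_zero]

lemma lneg_periods_coord {i : Fin n} {p : Fin n → ℤ} (hp : p ∈ (LNeg n i).periods) :
    p i = 0 := by
  rcases hp with ⟨j, hj, rfl⟩ | ⟨j, hj, rfl⟩
  · have hne : ¬ (i = j) := fun h => (hj : j ≠ i) h.symm
    simp [Pi.single_apply, hne]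
  · have hne : ¬ (i = j) := fun h => (hj : j ≠ i) h.symm
    simp [Pi.single_apply, hne]

lemma lneg_toSet_coord {i : Fin n} {x : Fin n → ℤ} (hx : x ∈ (LNeg n i).toSet) :
    x i = -1 := by
  obtain ⟨p, hp, rfl⟩ := hx
  have hp0 : p i = 0 := by
    induction hp using AddSubmonoid.closure_induction with
    | mem y hy => exact lneg_periods_coord hy
    | zero => rfl
    | add a b ha hb iha ihb => simp [iha, ihb]
  simp [LNeg, hp0]

lemma kreach_lneg_traj {k : ℕ} {i : Fin n} {x y : Fin n → ℤ} {w : List (Sig n)}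
    (h : KReach (LNeg n i) k x w y) :
    y i = x i + wordEff w i ∧
      ∀ u, u <+: w → -(k:ℤ) ≤ x i + wordEff u i ∧ x i + wordEff u i ≤ k := by
  induction h with
  | refl x hbox =>
    refine ⟨by simp [wordEff_nil], ?_⟩
    intro u hu
    rw [List.prefix_nil.1 hu]
    simpa [wordEff_nil] using hbox i
  | letter a hbox hbox' h ih =>
    rename_i x y w
    obtain ⟨ih1, ih2⟩ := ih
    constructor
    · rw [ih1, wordEff_cons]; simp; ring
    · intro u hu
      rcases u with _ | ⟨b, u⟩
      · simpa [wordEff_nil] using hbox i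
      · rw [List.cons_prefix_cons] at hu
        obtain ⟨rfl, hu⟩ := hu
        have := ih2 u hu
        rw [wordEff_cons]
        simp only [Pi.add_apply] at this ⊢
        omega
  | eps hp hbox hbox' h ih =>
    rename_i x y w p
    obtain ⟨ih1, ih2⟩ := ih
    have h0 : p i = 0 := lneg_periods_coord hp
    have hx : (x - p) i = x i := by simp [h0]
    rw [hx] at ih1 ih2
    exact ⟨ih1, ih2⟩

lemma letterEff_mem_lneg_periods {i : Fin n} (a : Sig n) (ha : a.1 ≠ i) :
    letterEff a ∈ (LNeg n i).periods := by
  rw [letterEff_eq_single]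
  by_cases h2 : a.2 <;> simp [LNeg, h2]
  · exact Or.inl ⟨a.1, ha, rfl⟩
  · exact Or.inr ⟨a.1, ha, rfl⟩

lemma kreach_lneg_build {k : ℕ} (hk : 1 ≤ k) {i : Fin n} :
    ∀ (w : List (Sig n)) (c : ℤ),
      (∀ u, u <+: w → -(k:ℤ) ≤ c + wordEff u i ∧ c + wordEff u i ≤ k) →
      KReach (LNeg n i) k (Pi.single i c) w (Pi.single i (c + wordEff w i)) := by
  intro w
  induction w with
  | nil =>
    intro c hc
    have := hc [] List.prefix_rfl
    rw [wordEff_nil] at this ⊢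
    simpa using KReach.refl _ (inBox_single (by simpa using this))
  | cons a w ih =>
    intro c hc
    have hc0 := hc [] (by simp)
    rw [wordEff_nil] at hc0
    simp only [Pi.zero_apply, add_zero] at hc0
    by_cases hai : a.1 = i
    · have hd : letterEff a = Pi.single i (letterEff a i) := by
        have h := letterEff_single a
        rwa [hai] at h
      have hsum : Pi.single i c + letterEff a = Pi.single i (c + letterEff a i) := by
        conv_lhs => rw [hd]
        rw [← Pi.single_add]
      have hc1 := hc [a] (by
        rcases w with _ | _
        · simp
        · exact ⟨_, rfl⟩)
      have heffa : wordEff [a] i = letterEff a i := by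
        rw [show ([a] : List (Sig n)) = a :: [] from rfl, wordEff_cons, wordEff_nil]
        simp
      rw [heffa] at hc1
      have step : KReach (LNeg n i) k (Pi.single i (c + letterEff a i)) w
          (Pi.single i (c + letterEff a i + wordEff w i)) := by
        apply ih
        intro u hu
        have := hc (a :: u) (List.cons_prefix_cons.2 ⟨rfl, hu⟩)
        rw [wordEff_cons] at this
        simp only [Pi.add_apply] at this
        constructor <;> [omega; omega]
      have final : c + letterEff a i + wordEff w i = c + wordEff (a :: w) i := by
        rw [wordEff_cons]; simp; ring
      rw [final] at step
      refine KReach.letter a (inBox_single hc0) ?_ ?_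
      · rw [hsum]; exact inBox_single hc1
      · rw [hsum]; exact step
    · have heq : wordEff (a :: w) i = wordEff w i := by
        rw [wordEff_cons]
        have : letterEff a i = 0 := letterEff_ne a (fun h => hai h.symm)
        simp [this]
      have hx' : inBox k (Pi.single i c + letterEff a) := by
        intro j
        have hb := letterEff_bounds a j
        rcases eq_or_ne j i with rfl | hne
        · have : letterEff a j = 0 := letterEff_ne a (fun h => hai h.symm)
          simp [this]; omega
        · simp only [Pi.add_apply, Pi.single_apply, if_neg hne]
          simp only [zero_add]
          omega
      refine KReach.letter a (inBox_single hc0) hx' ?_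
      refine KReach.eps (letterEff_mem_lneg_periods a hai) hx' ?_ ?_
      · simpa using inBox_single hc0
      · have step : KReach (LNeg n i) k (Pi.single i c) w
            (Pi.single i (c + wordEff w i)) := by
          apply ih
          intro u hu
          have := hc (a :: u) (List.cons_prefix_cons.2 ⟨rfl, hu⟩)
          rw [wordEff_cons] at this
          have hz : letterEff a i = 0 := letterEff_ne a (fun h => hai h.symm)
          simp only [Pi.add_apply, hz, zero_add] at this
          exact this
        rw [heq]
        simpa using step

lemma kapprox_lneg_iff {k : ℕ} (hk : 1 ≤ k) {i : Fin n} {w : List (Sig n)} :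
    w ∈ KApprox (LNeg n i) k ↔
      wordEff w i = -1 ∧
        ∀ u, u <+: w → -(k:ℤ) ≤ wordEff u i ∧ wordEff u i ≤ k := by
  constructor
  · rintro ⟨y, hr, hy⟩
    obtain ⟨h1, h2⟩ := kreach_lneg_traj hr
    have hyi := lneg_toSet_coord hy
    simp only [Pi.zero_apply, zero_add] at h1 h2
    exact ⟨by omega, fun u hu => h2 u hu⟩
  · rintro ⟨h1, h2⟩
    have := kreach_lneg_build hk w 0 (by simpa using h2)
    rw [h1] at this
    refine ⟨Pi.single i (0 + -1), by simpa using this, ?_⟩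
    refine ⟨0, AddSubmonoid.zero_mem _, ?_⟩
    funext j
    rcases eq_or_ne j i with rfl | hne
    · simp [LNeg]
    · simp [LNeg, Pi.single_apply, hne]
/-- The separator language: some prefix hits `-1` in coordinate `i` while
staying in the window. -/
def SepLang (n k : ℕ) (i : Fin n) : Language (Sig n) :=
  {w | ∃ u, u <+: w ∧ wordEff u i = -1 ∧
    ∀ v, v <+: u → -(k:ℤ) ≤ wordEff v i ∧ wordEff v i ≤ k}

lemma sep_eq_prod {k : ℕ} (hk : 1 ≤ k) (i : Fin n) :
    KApprox (LNeg n i) k * KApprox (ZSet n) k = SepLang n k i := by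
  ext w
  rw [Language.mem_mul]
  constructor
  · rintro ⟨u, hu, v, hv, rfl⟩
    obtain ⟨h1, h2⟩ := (kapprox_lneg_iff hk).1 hu
    exact ⟨u, ⟨v, rfl⟩, h1, fun v' hv' => h2 v' hv'⟩
  · rintro ⟨u, ⟨v, rfl⟩, h1, h2⟩
    exact ⟨u, (kapprox_lneg_iff hk).2 ⟨h1, h2⟩, v, by rw [kapprox_zset hk]; trivial, rfl⟩

/-- `AccP`: some prefix hits `-1` in coordinate `i`, with all proper prefixes
staying within `[0, k]`. -/
def AccP (k : ℕ) (i : Fin n) (w : List (Sig n)) : Prop :=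
  ∃ u, u <+: w ∧ wordEff u i = -1 ∧
    ∀ v, v <+: u → v ≠ u → 0 ≤ wordEff v i ∧ wordEff v i ≤ k

lemma sep_iff_accP {k : ℕ} (hk : 1 ≤ k) {i : Fin n} {w : List (Sig n)} :
    w ∈ SepLang n k i ↔ AccP k i w := by
  constructor
  · rintro ⟨u, hu, h1, h2⟩
    obtain ⟨u', hu', h1', h2'⟩ := firstHit (i := i) (List.prefix_rfl (l := u)) (by rw [h1]; omega)
    refine ⟨u', hu'.trans hu, h1', fun v hv hne => ?_⟩
    exact ⟨h2' v hv hne, ((h2 v (hv.trans hu')).2)⟩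
  · rintro ⟨u, hu, h1, h2⟩
    refine ⟨u, hu, h1, fun v hv => ?_⟩
    rcases eq_or_ne v u with rfl | hne
    · constructor <;> omega
    · have := h2 v hv hne
      constructor <;> omega

/-- The DFA recognizing `SepLang n k i`:
`none` = accept sink, `some none` = dead sink, `some (some c)` = current value. -/
def sepDFA (n k : ℕ) (i : Fin n) : DFA (Sig n) (Option (Option (Fin (k+1)))) where
  step := fun q a =>
    match q with
    | none => none
    | some none => some none
    | some (some c) =>
      let z : ℤ := (c : ℤ) + letterEff a i
      if z = -1 then none
      else if hz : 0 ≤ z ∧ z ≤ k then some (some ⟨z.toNat, by omega⟩)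
      else some none
  start := some (some ⟨0, by omega⟩)
  accept := {none}

/-- `DeadP`: dead state invariant. -/
def DeadP (k : ℕ) (i : Fin n) (w : List (Sig n)) : Prop :=
  ¬ AccP k i w ∧ ∃ u, u <+: w ∧ wordEff u i = (k:ℤ)+1 ∧
    ∀ v, v <+: u → v ≠ u → 0 ≤ wordEff v i ∧ wordEff v i ≤ k

/-- `InP`: all prefixes within `[0,k]`. -/
def InP (k : ℕ) (i : Fin n) (w : List (Sig n)) : Prop :=
  ∀ v, v <+: w → 0 ≤ wordEff v i ∧ wordEff v i ≤ k

lemma sepDFA_spec {k : ℕ} {i : Fin n} (w : List (Sig n)) :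
    ((sepDFA n k i).eval w = none ∧ AccP k i w) ∨
    ((sepDFA n k i).eval w = some none ∧ DeadP k i w) ∨
    (∃ c : Fin (k+1), (sepDFA n k i).eval w = some (some c) ∧ InP k i w ∧
      (c : ℤ) = wordEff w i) := by
  induction w using List.reverseRecOn with
  | nil =>
    refine Or.inr (Or.inr ⟨⟨0, by omega⟩, rfl, ?_, by simp [wordEff_nil]⟩)
    intro v hv
    rw [List.prefix_nil.1 hv, wordEff_nil]
    simp
  | append_singleton w a ih =>
    rw [DFA.eval_append_singleton]
    have heff : wordEff (w ++ [a]) i = wordEff w i + letterEff a i := by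
      rw [wordEff_append, wordEff_cons, wordEff_nil]
      show wordEff w i + (letterEff a i + 0) = _
      ring
    rcases ih with ⟨hq, hacc⟩ | ⟨hq, hdead⟩ | ⟨c, hq, hin, hc⟩
    · rw [hq]
      refine Or.inl ⟨rfl, ?_⟩
      obtain ⟨u, hu, h1, h2⟩ := hacc
      exact ⟨u, hu.trans ⟨[a], rfl⟩, h1, h2⟩
    · rw [hq]
      refine Or.inr (Or.inl ⟨rfl, ?_, ?_⟩)
      · rintro ⟨u, hu, h1, h2⟩
        rcases List.prefix_concat_iff.1 hu with rfl | hu'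
        · obtain ⟨u₀, hu₀, hd1, hd2⟩ := hdead.2
          have hne : u₀ ≠ w ++ [a] := by
            intro h; rw [h] at hd1; omega
          have := h2 u₀ (hu₀.trans ⟨[a], rfl⟩) hne
          omega
        · exact hdead.1 ⟨u, hu', h1, h2⟩
      · obtain ⟨u₀, hu₀, hd1, hd2⟩ := hdead.2
        exact ⟨u₀, hu₀.trans ⟨[a], rfl⟩, hd1, hd2⟩
    · rw [hq]
      simp only [sepDFA]
      have hb := letterEff_bounds a i
      have hin' : ∀ v, v <+: w ++ [a] → v ≠ w ++ [a] →
          0 ≤ wordEff v i ∧ wordEff v i ≤ k := by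
        intro v hv hne
        rcases List.prefix_concat_iff.1 hv with rfl | hv'
        · exact absurd rfl hne
        · exact hin v hv'
      by_cases hz1 : (c : ℤ) + letterEff a i = -1
      · rw [if_pos hz1]
        refine Or.inl ⟨rfl, w ++ [a], List.prefix_rfl, by omega, hin'⟩
      · rw [if_neg hz1]
        by_cases hz2 : 0 ≤ (c : ℤ) + letterEff a i ∧ (c : ℤ) + letterEff a i ≤ k
        · rw [dif_pos hz2]
          refine Or.inr (Or.inr ⟨⟨((c : ℤ) + letterEff a i).toNat, by omega⟩, rfl, ?_, ?_⟩)
          · intro v hv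
            rcases List.prefix_concat_iff.1 hv with rfl | hv'
            · rw [heff]; omega
            · exact hin v hv'
          · simp only [Fin.val_mk]
            rw [heff]
            omega
        · rw [dif_neg hz2]
          have hz3 : (c : ℤ) + letterEff a i = (k:ℤ) + 1 := by
            have := c.isLt
            have : (c : ℤ) ≤ k := by exact_mod_cast Nat.lt_succ_iff.1 c.isLt
            omega
          refine Or.inr (Or.inl ⟨rfl, ?_, w ++ [a], List.prefix_rfl, by omega, hin'⟩)
          rintro ⟨u, hu, h1, h2⟩
          rcases List.prefix_concat_iff.1 hu with rfl | hu'
          · rw [heff] at h1; omega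
          · have := hin u hu'
            omega

lemma sepDFA_accepts {k : ℕ} (hk : 1 ≤ k) (i : Fin n) :
    (sepDFA n k i).accepts = SepLang n k i := by
  ext w
  rw [DFA.mem_accepts]
  show (sepDFA n k i).eval w ∈ ({none} : Set (Option (Option (Fin (k+1))))) ↔ _
  rw [Set.mem_singleton_iff, sep_iff_accP hk]
  rcases sepDFA_spec (k := k) (i := i) w with ⟨hq, hacc⟩ | ⟨hq, hdead⟩ | ⟨c, hq, hin, hc⟩
  · simp [hq, hacc]
  · simp only [hq]
    constructor
    · intro h; exact absurd h (by simp)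
    · intro h; exact absurd h hdead.1
  · simp only [hq]
    constructor
    · intro h; exact absurd h (by simp)
    · rintro ⟨u, hu, h1, h2⟩
      have := hin u hu
      omega

lemma sepLang_regular {k : ℕ} (hk : 1 ≤ k) (i : Fin n) :
    (SepLang n k i).IsRegular :=
  ⟨Option (Option (Fin (k+1))), inferInstance, sepDFA n k i, sepDFA_accepts hk i⟩

lemma sepLang_disjoint {k : ℕ} (i : Fin n) {w : List (Sig n)}
    (hw : w ∈ SepLang n k i) : w ∉ CovDyck n := by
  obtain ⟨u, hu, h1, _⟩ := hw
  intro hcov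
  have := hcov u hu i
  omega
lemma nat_monotone_subseq (f : ℕ → ℕ) :
    ∃ g : ℕ → ℕ, StrictMono g ∧ Monotone (f ∘ g) := by
  have hpwo : (Set.univ : Set ℕ).IsPWO :=
    (Set.isWF_univ_iff.2 inferInstance).isPWO
  obtain ⟨g, hg⟩ := Set.isPWO_iff_exists_monotone_subseq.1 hpwo f (fun _ => trivial)
  exact ⟨g, g.strictMono, hg⟩

lemma pi_monotone_subseq : ∀ (m : ℕ) (f : ℕ → (Fin m → ℕ)),
    ∃ g : ℕ → ℕ, StrictMono g ∧ ∀ j, Monotone (fun t => f (g t) j) := by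
  intro m
  induction m with
  | zero => exact fun f => ⟨id, strictMono_id, fun j => j.elim0⟩
  | succ m IH =>
    intro f
    obtain ⟨g₁, hg₁, hmono₁⟩ := IH (fun t => fun j : Fin m => f t j.castSucc)
    obtain ⟨g₂, hg₂, hmono₂⟩ := nat_monotone_subseq (fun t => f (g₁ t) (Fin.last m))
    refine ⟨g₁ ∘ g₂, hg₁.comp hg₂, fun j => ?_⟩
    induction j using Fin.lastCases with
    | last => exact hmono₂
    | cast j => exact (hmono₁ j).comp hg₂.monotone

lemma pwo_pair {m : ℕ} (f : ℕ → (Fin m → ℕ)) :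
    ∃ s t, s < t ∧ ∀ j, f s j ≤ f t j := by
  obtain ⟨g, hg, hmono⟩ := pi_monotone_subseq m f
  exact ⟨g 0, g 1, hg (by omega), fun j => hmono j (by omega : (0:ℕ) ≤ 1)⟩

/-- Dickson-style capping lemma. -/
lemma dickson {σ : Type} [Finite σ] {m : ℕ} (P : σ → (Fin m → ℕ) → Prop)
    (mono : ∀ q c c', (∀ j, c j ≤ c' j) → P q c → P q c') :
    ∃ B : ℕ, ∀ q c, P q c → P q (fun j => min (c j) B) := by
  classical
  set Min : σ → Set (Fin m → ℕ) :=
    fun q => {c | P q c ∧ ∀ c', P q c' → (∀ j, c' j ≤ c j) → c' = c} with hMin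
  -- every P-point dominates a minimal point
  have hdom : ∀ q c, P q c → ∃ d ∈ Min q, ∀ j, d j ≤ c j := by
    intro q c hc
    obtain ⟨S, hS⟩ : ∃ S, (∑ j, c j) = S := ⟨_, rfl⟩
    induction S using Nat.strong_induction_on generalizing c with
    | _ S IH =>
    by_cases hmin : ∀ c', P q c' → (∀ j, c' j ≤ c j) → c' = c
    · exact ⟨c, ⟨hc, hmin⟩, fun j => le_rfl⟩
    · push_neg at hmin
      obtain ⟨c', hc', hle, hne⟩ := hmin
      have hlt : (∑ j, c' j) < S := by
        rw [← hS]
        refine Finset.sum_lt_sum (fun j _ => hle j) ?_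
        by_contra hno
        push_neg at hno
        exact hne (funext fun j => le_antisymm (hle j) (hno j (Finset.mem_univ j)))
      obtain ⟨d, hd, hdle⟩ := IH _ hlt c' hc' rfl
      exact ⟨d, hd, fun j => (hdle j).trans (hle j)⟩
  -- each Min q is finite
  have hfin : ∀ q, (Min q).Finite := by
    intro q
    by_contra hinf
    have hinf' : (Min q).Infinite := hinf
    set e := hinf'.natEmbedding with he
    obtain ⟨s, t, hst, hle⟩ := pwo_pair (fun t => (e t).1)
    have : (e s).1 = (e t).1 := (e t).2.2 _ (e s).2.1 hle
    exact absurd (e.injective (Subtype.ext this)) (by omega)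
  -- bound
  have hfin2 : (⋃ q, Min q).Finite := Set.finite_iUnion hfin
  have hfin3 : ((fun p : (Fin m → ℕ) × Fin m => p.1 p.2) ''
      ((⋃ q, Min q) ×ˢ (Set.univ : Set (Fin m)))).Finite :=
    (hfin2.prod (Set.finite_univ)).image _
  obtain ⟨B, hB⟩ := hfin3.bddAbove
  refine ⟨B, fun q c hc => ?_⟩
  obtain ⟨d, hd, hdle⟩ := hdom q c hc
  refine mono q d _ (fun j => ?_) hd.1
  have hdB : d j ≤ B := hB ⟨⟨d, j⟩, ⟨Set.mem_prod.2 ⟨Set.mem_iUnion.2 ⟨q, hd⟩, trivial⟩, rfl⟩⟩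
  exact le_min (hdle j) hdB
section Cover

variable {σ : Type} (M : DFA (Sig n) σ)

/-- `BadP q c`: from DFA-state `q` with counter values `c` one can reach acceptance
while keeping all counters nonnegative. -/
def BadP (q : σ) (c : Fin n → ℕ) : Prop :=
  ∃ v, M.evalFrom q v ∈ M.accept ∧
    ∀ u, u <+: v → ∀ j, 0 ≤ (c j : ℤ) + wordEff u j

lemma badP_mono {q : σ} {c c' : Fin n → ℕ} (h : ∀ j, c j ≤ c' j)
    (hb : BadP M q c) : BadP M q c' := by
  obtain ⟨v, h1, h2⟩ := hb
  refine ⟨v, h1, fun u hu j => ?_⟩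
  have := h2 u hu j
  have := h j
  omega

theorem cover [Finite σ] (hdisj : ∀ w ∈ M.accepts, w ∉ CovDyck n) :
    ∃ B : ℕ, ∀ w ∈ M.accepts, ∃ i : Fin n, ∃ u, u <+: w ∧ wordEff u i = -1 ∧
      ∀ v, v <+: u → wordEff v i ≤ (B:ℤ) := by
  classical
  obtain ⟨B, hB⟩ := dickson (BadP M) (fun q c c' h hb => badP_mono M h hb)
  refine ⟨B, fun w hw => ?_⟩
  by_contra hno
  push_neg at hno
  -- hno : ∀ i u, u <+: w → wordEff u i = -1 → ∃ v, v <+: u ∧ B < wordEff v i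
  set Exc : ℕ → Fin n → Prop :=
    fun s i => ∃ v, v <+: w.take s ∧ (B:ℤ) < wordEff v i with hExc
  have hExcMono : ∀ {s s' : ℕ} {i}, s ≤ s' → Exc s i → Exc s' i := by
    rintro s s' i hss ⟨v, hv, hvB⟩
    exact ⟨v, hv.trans (List.take_prefix_take_left hss), hvB⟩
  have hnonneg : ∀ s i, ¬ Exc s i →
      0 ≤ wordEff (w.take s) i ∧ wordEff (w.take s) i ≤ B := by
    intro s i hE
    constructor
    · by_contra hneg
      push_neg at hneg
      obtain ⟨u', hu', h1', _⟩ := firstHit (i := i) (List.prefix_rfl (l := w.take s)) hneg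
      obtain ⟨v, hv, hvB⟩ := hno i u' (hu'.trans (List.take_prefix s w)) h1'
      exact hE ⟨v, hv.trans hu', hvB⟩
    · by_contra hgt
      push_neg at hgt
      exact hE ⟨w.take s, List.prefix_rfl, hgt⟩
  set r : ℕ → Fin n → ℕ :=
    fun s i => if Exc s i then B else (wordEff (w.take s) i).toNat with hr
  have hr_cast : ∀ s i, ¬ Exc s i → (r s i : ℤ) = wordEff (w.take s) i := by
    intro s i hE
    rw [hr]
    simp only [if_neg hE]
    exact Int.toNat_of_nonneg (hnonneg s i hE).1
  have hrB : ∀ s i, Exc s i → r s i = B := by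
    intro s i hE; rw [hr]; simp only [if_pos hE]
  have hinv : ∀ s, s ≤ w.length → ¬ BadP M (M.eval (w.take s)) (r s) := by
    intro s
    induction s with
    | zero =>
      intro _ hbad
      obtain ⟨v, h1, h2⟩ := hbad
      have hE0 : ∀ i, ¬ Exc 0 i := by
        rintro i ⟨v₀, hv₀, hvB⟩
        rw [List.take_zero] at hv₀
        rw [List.prefix_nil.1 hv₀, wordEff_nil] at hvB
        simp only [Pi.zero_apply] at hvB
        omega
      refine hdisj v ?_ ?_
      · rw [DFA.mem_accepts]
        rw [List.take_zero] at h1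
        exact h1
      · intro u hu j
        have := h2 u hu j
        have hc := hr_cast 0 j (hE0 j)
        rw [List.take_zero, wordEff_nil] at hc
        simp only [Pi.zero_apply] at hc
        omega
    | succ s IH =>
      intro hs hbad
      have hslt : s < w.length := by omega
      have hstep : w.take (s+1) = w.take s ++ [w[s]] := by
        rw [← List.take_concat_get hslt, List.concat_eq_append]
      have heff : ∀ j, wordEff (w.take (s+1)) j =
          wordEff (w.take s) j + letterEff w[s] j := by
        intro j
        rw [hstep, wordEff_append, wordEff_cons, wordEff_nil]
        simp
      obtain ⟨v, h1, h2⟩ := hbad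
      set X : ℕ := v.length + 1 with hX
      set r' : Fin n → ℕ := fun i => if Exc s i then B + X else r s i with hr'
      have claim1 : BadP M (M.eval (w.take s)) r' := by
        refine ⟨w[s] :: v, ?_, ?_⟩
        · show M.evalFrom _ _ ∈ M.accept
          have : M.evalFrom (M.eval (w.take s)) (w[s] :: v) =
              M.evalFrom (M.eval (w.take (s+1))) v := by
            rw [hstep, DFA.eval_append_singleton]
            rfl
          rw [this]
          exact h1
        · intro u hu j
          rcases u with _ | ⟨b, u'⟩
          · rw [wordEff_nil]
            simp only [Pi.zero_apply, add_zero]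
            positivity
          · rw [List.cons_prefix_cons] at hu
            obtain ⟨rfl, hu'⟩ := hu
            have hv2 := h2 u' hu' j
            have hwe : wordEff (w[s] :: u') j = letterEff w[s] j + wordEff u' j := by
              rw [wordEff_cons]; rfl
            rw [hwe]
            have hlb := letterEff_bounds w[s] j
            have hub := wordEff_abs_le u' j
            have hulen : u'.length ≤ v.length := hu'.length_le
            by_cases hE1 : Exc s j
            · have : r' j = B + X := by rw [hr']; simp only [if_pos hE1]
              rw [this]
              push_cast
              omega
            · have hr'j : (r' j : ℤ) = wordEff (w.take s) j := by
                rw [hr']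
                simp only [if_neg hE1]
                exact hr_cast s j hE1
              by_cases hE2 : Exc (s+1) j
              · have hbig : (B:ℤ) < wordEff (w.take (s+1)) j := by
                  obtain ⟨v₀, hv₀, hvB⟩ := hE2
                  rw [hstep] at hv₀
                  rcases List.prefix_concat_iff.1 hv₀ with rfl | hv₀'
                  · rwa [hstep]
                  · exact absurd ⟨v₀, hv₀', hvB⟩ hE1
                have hr2 : r (s+1) j = B := hrB (s+1) j hE2
                rw [hr2] at hv2
                have := heff j
                omega
              · have hr2 : (r (s+1) j : ℤ) = wordEff (w.take (s+1)) j :=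
                  hr_cast (s+1) j hE2
                have := heff j
                omega
      have hcap1 := hB _ _ claim1
      have heqcap : (fun j => min (r' j) B) = (fun j => min (r s j) B) := by
        funext j
        by_cases hE : Exc s j
        · rw [hr']
          simp only [if_pos hE, hrB s j hE]
          omega
        · rw [hr']
          simp only [if_neg hE]
      rw [heqcap] at hcap1
      exact IH (by omega) (badP_mono M (fun j => min_le_left _ _) hcap1)
  refine hinv w.length le_rfl ?_
  rw [List.take_length]
  refine ⟨[], ?_, ?_⟩
  · show M.evalFrom _ [] ∈ M.accept
    rw [DFA.evalFrom_nil]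
    exact (DFA.mem_accepts M).1 hw
  · intro u hu j
    rw [List.prefix_nil.1 hu, wordEff_nil]
    simp only [Pi.zero_apply, add_zero]
    positivity

end Cover
lemma sep_mem_RFam {k : ℕ} (hk : 1 ≤ k) (i : Fin n) :
    KApprox (LNeg n i) k * KApprox (ZSet n) k ∈ RFam n 2 := by
  refine ⟨k, [LNeg n i, ZSet n], rfl, ?_, ?_⟩
  · intro h0
    have h0' : (0 : Fin n → ℤ) ∈ posPlus (LNeg n i).toSet (ZSet n).toSet := h0
    obtain ⟨hpos, a, ha, hapos, b, hb, heq⟩ := h0'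
    have h1 := lneg_toSet_coord ha
    have h2 := hapos i
    omega
  · simp [List.prod_cons, List.prod_nil, mul_one]

end Aux10

theorem stmt10 (n : ℕ) (hn : 1 ≤ n) :
    ∃ S ⊆ RFam n 2, IsBasicSepSet (CovDyck n) S := by
  classical
  refine ⟨{K | ∃ k : ℕ, 1 ≤ k ∧ ∃ i : Fin n,
      K = KApprox (LNeg n i) k * KApprox (ZSet n) k}, ?_, ?_, ?_⟩
  · rintro K ⟨k, hk, i, rfl⟩
    exact sep_mem_RFam hk i
  · rintro K ⟨k, hk, i, rfl⟩
    rw [sep_eq_prod hk i]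
    exact ⟨sepLang_regular hk i, fun w hw => sepLang_disjoint i hw⟩
  · intro L hreg hdis
    obtain ⟨σ, hσ, M, hM⟩ := hreg
    have hdisj : ∀ w ∈ M.accepts, w ∉ CovDyck n := by
      intro w hw
      exact hdis w (hM ▸ hw)
    obtain ⟨B, hcov⟩ := cover M hdisj
    refine ⟨Set.range (fun i : Fin n =>
      KApprox (LNeg n i) (B+1) * KApprox (ZSet n) (B+1)), ?_, Set.finite_range _, ?_⟩
    · rintro K ⟨i, rfl⟩
      exact ⟨B+1, by omega, i, rfl⟩
    · intro w hw
      obtain ⟨i, u, hu, h1, h2⟩ := hcov w (by rw [hM]; exact hw)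
      refine ⟨_, ⟨i, rfl⟩, ?_⟩
      show w ∈ KApprox (LNeg n i) (B+1) * KApprox (ZSet n) (B+1)
      rw [sep_eq_prod (by omega : 1 ≤ B + 1) i]
      obtain ⟨u', hu', h1', h2'⟩ := firstHit (i := i) hu (by rw [h1]; omega)
      refine ⟨u', hu'.trans hu, h1', fun v hv => ?_⟩
      constructor
      · rcases eq_or_ne v u' with rfl | hne
        · rw [h1']; push_cast; omega
        · have := h2' v hv hne
          push_cast
          omega
      · have := h2 v (hv.trans hu')
        push_cast
        omega
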